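/- (Characterization of the null-model penalization threshold λ*.) Let X ∈ ℝ^{n×p} have centered columns x_{(1)}, …, x_{(p)} (so 1ᵀx_{(j)} = 0 for each j), let y ∈ {0,1}ⁿ with sample mean ȳ = (1/n)1ᵀy ∈ (0,1), let λ > 0, α ∈ (0,1], and consider the objective ξ(β₀, β) = (1/n)‖y − F(β₀·1 + Xβ)‖₂² + λ(α‖β‖₁ + ((1−α)/2)‖β‖₂²). Then the point θ₀ = (log(ȳ/(1−ȳ)), 0) satisfies the first-order stationarity condition (zero partial derivative in β₀ and 0 contained in the subdifferential of ξ with respect to each β_j) if and only if λ ≥ λ* := (2/(nα))·ȳ(1−ȳ)·max_{j=1,…,p} |x_{(j)}ᵀ y|. -/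

import Mathlib

open Finset

/-- The logistic function `F(u) = 1/(1 + exp(-u))`. -/
noncomputable def logisticF (u : ℝ) : ℝ := 1 / (1 + Real.exp (-u))

lemma logisticF_hasDerivAt (u : ℝ) :
    HasDerivAt logisticF (logisticF u * (1 - logisticF u)) u := by
  have h1 : HasDerivAt (fun u : ℝ => 1 + Real.exp (-u)) (-Real.exp (-u)) u := by
    simpa using (HasDerivAt.exp (hasDerivAt_neg u)).const_add 1
  have hne : (1 + Real.exp (-u)) ≠ 0 := by positivity
  have h2 : HasDerivAt (fun u : ℝ => (1 + Real.exp (-u))⁻¹) _ u := h1.inv hne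
  have heq : logisticF = fun u : ℝ => (1 + Real.exp (-u))⁻¹ := by
    funext v; simp [logisticF, one_div]
  rw [heq]
  convert h2 using 1
  beta_reduce
  field_simp
  ring

lemma logisticF_log (c : ℝ) (h0 : 0 < c) (h1 : c < 1) :
    logisticF (Real.log (c / (1 - c))) = c := by
  have h1' : 0 < 1 - c := by linarith
  rw [logisticF, ← Real.log_inv, Real.exp_log (by positivity)]
  field_simp
  ring

/-- characterization of the null-model penalization threshold `λ*`:
for centered columns and `ȳ ∈ (0,1)`, the point `θ₀ = (log(ȳ/(1−ȳ)), 0)` satisfies the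
first-order stationarity condition for
`ξ(β₀,β) = (1/n)‖y − F(β₀1 + Xβ)‖₂² + λ(α‖β‖₁ + ((1−α)/2)‖β‖₂²)`
(zero partial derivative in `β₀`, and `0` in the subdifferential with respect to each
`βⱼ`, i.e. the smooth partial derivative is cancelled by some `λα·s`, `s ∈ [−1,1]`)
if and only if `λ ≥ λ* = (2/(nα))·ȳ(1−ȳ)·max_j |x_{(j)}ᵀy|`. -/
theorem stmt_13 (n p : ℕ) (hn : 0 < n) (hp : 0 < p)
    (X : Matrix (Fin n) (Fin p) ℝ) (hcent : ∀ j, ∑ i, X i j = 0)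
    (y : Fin n → ℝ) (hy : ∀ i, y i = 0 ∨ y i = 1)
    (ybar : ℝ) (hybar : ybar = (∑ i, y i) / n) (hmean : ybar ∈ Set.Ioo (0:ℝ) 1)
    (lam α : ℝ) (hlam : 0 < lam) (hα : α ∈ Set.Ioc (0:ℝ) 1) :
    (deriv (fun b : ℝ => (1/(n:ℝ)) * ∑ i, (y i - logisticF b)^2)
        (Real.log (ybar / (1 - ybar))) = 0 ∧
     ∀ j : Fin p, ∃ s ∈ Set.Icc (-1:ℝ) 1,
        deriv (fun t : ℝ =>
            (1/(n:ℝ)) * ∑ i,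
                (y i - logisticF (Real.log (ybar / (1 - ybar)) + t * X i j))^2
              + lam * ((1 - α)/2) * t^2) 0
          + lam * α * s = 0) ↔
    lam ≥ (2/((n:ℝ) * α)) * (ybar * (1 - ybar))
        * (Finset.univ.sup' (Finset.univ_nonempty_iff.mpr ⟨⟨0, hp⟩⟩)
            fun j : Fin p => |∑ i, X i j * y i|) := by
  have hn0 : ((n:ℝ)) ≠ 0 := Nat.cast_ne_zero.mpr hn.ne'
  have hnpos : (0:ℝ) < n := Nat.cast_pos.mpr hn
  set b0 := Real.log (ybar / (1 - ybar)) with hb0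
  have hF : logisticF b0 = ybar := logisticF_log ybar hmean.1 hmean.2
  have hsum : ∑ i, y i = n * ybar := by rw [hybar]; field_simp
  have hsum0 : ∑ i : Fin n, (y i - ybar) = 0 := by
    rw [Finset.sum_sub_distrib, hsum, Finset.sum_const]
    simp [nsmul_eq_mul]
  -- Part 1: the β₀-derivative vanishes
  have hd1 : HasDerivAt (fun b : ℝ => (1/(n:ℝ)) * ∑ i, (y i - logisticF b)^2)
      ((1/(n:ℝ)) * ∑ i, ((2:ℕ) * (y i - logisticF b0)^(2-1)
        * (0 - logisticF b0 * (1 - logisticF b0)))) b0 :=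
    HasDerivAt.const_mul _ (HasDerivAt.fun_sum fun i _ =>
      ((hasDerivAt_const b0 (y i)).sub (logisticF_hasDerivAt b0)).fun_pow 2)
  have hpart1 : deriv (fun b : ℝ => (1/(n:ℝ)) * ∑ i, (y i - logisticF b)^2) b0 = 0 := by
    rw [hd1.deriv, hF]
    have e1 : ∀ i : Fin n, ((2:ℕ):ℝ) * (y i - ybar)^(2-1) * (0 - ybar * (1 - ybar))
        = (2 * (0 - ybar * (1 - ybar))) * (y i - ybar) := fun i => by
      push_cast; ring
    simp only [e1, ← Finset.mul_sum, hsum0, mul_zero]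
  -- Part 2: the βⱼ-derivatives
  have hDj : ∀ j : Fin p, deriv (fun t : ℝ =>
      (1/(n:ℝ)) * ∑ i, (y i - logisticF (b0 + t * X i j))^2
        + lam * ((1 - α)/2) * t^2) 0
      = -((2/(n:ℝ)) * (ybar * (1 - ybar)) * ∑ i, X i j * y i) := by
    intro j
    have hinner : ∀ i : Fin n, HasDerivAt (fun t : ℝ => b0 + t * X i j) (X i j) 0 := by
      intro i
      simpa using ((hasDerivAt_id (0:ℝ)).mul_const (X i j)).const_add b0
    have hcomp : ∀ i : Fin n, HasDerivAt (fun t : ℝ => logisticF (b0 + t * X i j))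
        (logisticF (b0 + 0 * X i j) * (1 - logisticF (b0 + 0 * X i j)) * X i j) 0 :=
      fun i => HasDerivAt.comp (h₂ := logisticF) 0 (logisticF_hasDerivAt (b0 + 0 * X i j)) (hinner i)
    have hd2 : HasDerivAt (fun t : ℝ =>
        (1/(n:ℝ)) * ∑ i, (y i - logisticF (b0 + t * X i j))^2
          + lam * ((1 - α)/2) * t^2)
        ((1/(n:ℝ)) * ∑ i, ((2:ℕ) * (y i - logisticF (b0 + 0 * X i j))^(2-1)
          * (0 - logisticF (b0 + 0 * X i j) * (1 - logisticF (b0 + 0 * X i j)) * X i j))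
          + lam * ((1 - α)/2) * ((2:ℕ) * (0:ℝ)^(2-1))) 0 := by
      exact (HasDerivAt.const_mul _ (HasDerivAt.fun_sum fun i _ =>
        ((hasDerivAt_const 0 (y i)).sub (hcomp i)).fun_pow 2)).add
        ((hasDerivAt_pow 2 (0:ℝ)).const_mul _)
    rw [hd2.deriv]
    simp only [zero_mul, add_zero, hF]
    have e1 : ∀ i : Fin n, ((2:ℕ):ℝ) * (y i - ybar)^(2-1)
        * (0 - ybar * (1 - ybar) * X i j)
        = (-(2 * (ybar * (1 - ybar)))) * (X i j * y i)
          + ((2 * (ybar * (1 - ybar))) * ybar) * X i j := fun i => by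
      push_cast; ring
    rw [Finset.sum_congr rfl (fun i _ => e1 i)]
    rw [Finset.sum_add_distrib, ← Finset.mul_sum, ← Finset.mul_sum, hcent j]
    push_cast
    ring
  have hla : 0 < lam * α := mul_pos hlam hα.1
  have key : ∀ D : ℝ, (∃ s ∈ Set.Icc (-1:ℝ) 1, D + lam * α * s = 0) ↔ |D| ≤ lam * α := by
    intro D
    constructor
    · rintro ⟨s, ⟨hs1, hs2⟩, h⟩
      have hD : D = -(lam * α * s) := by linarith
      rw [hD, abs_neg, abs_mul, abs_of_pos hla]
      nlinarith [abs_le.mpr ⟨hs1, hs2⟩, abs_nonneg s]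
    · intro h
      refine ⟨-D / (lam * α), ?_, by rw [mul_div_cancel₀ _ hla.ne']; ring⟩
      have h' : |(-D) / (lam * α)| ≤ 1 := by
        rw [abs_div, abs_neg, abs_of_pos hla]
        exact div_le_one_of_le₀ h hla.le
      exact abs_le.mp h'
  have hu : 0 < ybar * (1 - ybar) := mul_pos hmean.1 (by linarith [hmean.2])
  have habs : ∀ j : Fin p,
      |(-((2/(n:ℝ)) * (ybar * (1 - ybar)) * ∑ i, X i j * y i))|
      = (2/(n:ℝ)) * (ybar * (1 - ybar)) * |∑ i, X i j * y i| := by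
    intro j
    rw [abs_neg, abs_mul, abs_mul, abs_of_pos (by positivity : (0:ℝ) < 2/(n:ℝ)),
      abs_of_pos hu]
  have hiff : ∀ t : ℝ, (2/((n:ℝ) * α)) * (ybar * (1 - ybar)) * t ≤ lam
      ↔ (2/(n:ℝ)) * (ybar * (1 - ybar)) * t ≤ lam * α := by
    intro t
    rw [show (2/((n:ℝ) * α)) * (ybar * (1 - ybar)) * t
        = ((2/(n:ℝ)) * (ybar * (1 - ybar)) * t) / α from by field_simp,
      div_le_iff₀ hα.1]
  set c : ℝ := (2/((n:ℝ) * α)) * (ybar * (1 - ybar)) with hc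
  have hcpos : 0 < c := by
    have : 0 < (n:ℝ) * α := mul_pos hnpos hα.1
    positivity
  constructor
  · rintro ⟨-, h2⟩
    rw [ge_iff_le, mul_comm c, ← le_div_iff₀ hcpos]
    rw [Finset.sup'_le_iff]
    intro j _
    rw [le_div_iff₀ hcpos, mul_comm, hiff]
    obtain ⟨s, hs, heq⟩ := h2 j
    rw [hDj j] at heq
    have := (key _).mp ⟨s, hs, heq⟩
    rw [habs j] at this
    exact this
  · intro h
    refine ⟨hpart1, fun j => ?_⟩
    rw [hDj j]
    apply (key _).mpr
    rw [habs j, ← hiff]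
    calc (2/((n:ℝ) * α)) * (ybar * (1 - ybar)) * |∑ i, X i j * y i|
        ≤ c * (Finset.univ.sup' (Finset.univ_nonempty_iff.mpr ⟨⟨0, hp⟩⟩)
            fun j : Fin p => |∑ i, X i j * y i|) := by
          apply mul_le_mul_of_nonneg_left _ hcpos.le
          exact Finset.le_sup' (fun j : Fin p => |∑ i, X i j * y i|) (Finset.mem_univ j)
      _ ≤ lam := h
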